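/- For m ≥ 1 a positive integer and 0 < ζ < ξ, ∫_{ζ²}^{ξ²} z^{m-1} K_0(2√z) dz = G(ξ²) − G(ζ²), where G(z) = z^m K_0(2√z) ₁F₂(1; m, m+1; z)/m + z^{m+1/2} K_1(2√z) ₁F₂(1; m+1, m+1; z)/m². -/

import Mathlib

open Real Filter Set MeasureTheory intervalIntegral

open Topology
open scoped Nat

/-- Modified Bessel function of the second kind of order `t`. -/
noncomputable def besselK (t x : ℝ) : ℝ :=
  ∫ u in Set.Ioi (0 : ℝ), Real.exp (-x * Real.cosh u) * Real.cosh (t * u)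

lemma cosh_le_exp {u : ℝ} (hu : 0 ≤ u) : Real.cosh u ≤ Real.exp u := by
  rw [Real.cosh_eq]
  have : Real.exp (-u) ≤ Real.exp u := Real.exp_le_exp.2 (by linarith)
  linarith

lemma aux_event {c : ℝ} (x : ℝ) (hc : 0 ≤ c) (hx : 0 < x) :
    ∀ᶠ u in atTop, Real.exp (c * u - x * Real.cosh u) ≤ Real.exp (-u) := by
  have h1 : Tendsto (fun u : ℝ => Real.exp u / u) atTop atTop := by
    simpa using Real.tendsto_exp_div_pow_atTop 1
  filter_upwards [h1.eventually_ge_atTop (2 * (c + 1) / x), eventually_ge_atTop (1:ℝ)]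
    with u h2 h3
  have hu : (0:ℝ) < u := lt_of_lt_of_le one_pos h3
  have h2' : 2 * (c + 1) / x * u ≤ Real.exp u := (le_div_iff₀ hu).1 h2
  have hcosh : Real.exp u / 2 ≤ Real.cosh u := by
    rw [Real.cosh_eq]
    have := (Real.exp_pos (-u)).le
    linarith
  apply Real.exp_le_exp.2
  have h4 : x * (Real.exp u / 2) ≤ x * Real.cosh u := by
    apply mul_le_mul_of_nonneg_left hcosh hx.le
  have h5 : 2 * (c+1) / x * u * x = 2 * (c+1) * u := by field_simp
  nlinarith [mul_le_mul_of_nonneg_right h2' hx.le]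

lemma int_k (k : ℕ) {t x : ℝ} (ht : 0 ≤ t) (hx : 0 < x) :
    IntegrableOn (fun u => Real.cosh u ^ k * (Real.exp (-x * Real.cosh u) * Real.cosh (t * u)))
      (Set.Ioi (0:ℝ)) := by
  apply integrable_of_isBigO_exp_neg (b := 1) one_pos
  · fun_prop
  · rw [Asymptotics.isBigO_iff]
    refine ⟨1, ?_⟩
    filter_upwards [aux_event x (by positivity : (0:ℝ) ≤ (k:ℝ) + t) hx,
      eventually_ge_atTop (0:ℝ)] with u h1 h2
    have e1 : Real.cosh u ^ k ≤ Real.exp ((k:ℝ) * u) := by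
      calc Real.cosh u ^ k ≤ Real.exp u ^ k :=
            pow_le_pow_left₀ (Real.cosh_pos u).le (cosh_le_exp h2) k
        _ = Real.exp ((k:ℝ) * u) := by rw [← Real.exp_nat_mul]
    have e2 : Real.cosh (t * u) ≤ Real.exp (t * u) := cosh_le_exp (by positivity)
    have hnn : 0 ≤ Real.cosh u ^ k * (Real.exp (-x * Real.cosh u) * Real.cosh (t * u)) := by
      positivity
    rw [Real.norm_eq_abs, Real.norm_eq_abs, abs_of_nonneg hnn,
      abs_of_nonneg (Real.exp_pos _).le]
    calc Real.cosh u ^ k * (Real.exp (-x * Real.cosh u) * Real.cosh (t * u))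
        ≤ Real.exp ((k:ℝ) * u) * (Real.exp (-x * Real.cosh u) * Real.exp (t * u)) := by
          apply mul_le_mul e1 (mul_le_mul_of_nonneg_left e2 (Real.exp_pos _).le) ?_ (Real.exp_pos _).le
          positivity
      _ = Real.exp (((k:ℝ) + t) * u - x * Real.cosh u) := by
          rw [← Real.exp_add, ← Real.exp_add]; ring_nf
      _ ≤ Real.exp (-u) := h1
      _ = 1 * Real.exp (-1 * u) := by rw [one_mul]; ring_nf

lemma int_0 {t x : ℝ} (ht : 0 ≤ t) (hx : 0 < x) :
    IntegrableOn (fun u => Real.exp (-x * Real.cosh u) * Real.cosh (t * u)) (Set.Ioi (0:ℝ)) := by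
  have := int_k 0 ht hx
  simpa using this

lemma int_1 {t x : ℝ} (ht : 0 ≤ t) (hx : 0 < x) :
    IntegrableOn (fun u => Real.cosh u * (Real.exp (-x * Real.cosh u) * Real.cosh (t * u)))
      (Set.Ioi (0:ℝ)) := by
  have := int_k 1 ht hx
  simpa using this

noncomputable def Kder (t x : ℝ) : ℝ :=
  ∫ u in Set.Ioi (0:ℝ), Real.cosh u * (Real.exp (-x * Real.cosh u) * Real.cosh (t * u))

lemma besselK_hasDerivAt {t x : ℝ} (ht : 0 ≤ t) (hx : 0 < x) :
    HasDerivAt (besselK t) (-Kder t x) x := by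
  have key := _root_.hasDerivAt_integral_of_dominated_loc_of_deriv_le
    (μ := volume.restrict (Set.Ioi (0:ℝ))) (x₀ := x) (s := Metric.ball x (x/2)) (Metric.ball_mem_nhds x (by positivity))
    (F := fun y u => Real.exp (-y * Real.cosh u) * Real.cosh (t * u))
    (F' := fun y u => -(Real.cosh u * (Real.exp (-y * Real.cosh u) * Real.cosh (t * u))))
    (bound := fun u => Real.cosh u * (Real.exp (-(x/2) * Real.cosh u) * Real.cosh (t * u)))
    ?_ ?_ ?_ ?_ ?_ ?_
  · have := key.2
    unfold besselK Kder
    rw [← MeasureTheory.integral_neg]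
    exact this
  · filter_upwards with y
    exact (Continuous.aestronglyMeasurable (by fun_prop))
  · exact int_0 ht hx
  · exact (Continuous.aestronglyMeasurable (by fun_prop))
  · filter_upwards with u
    intro y hy
    have hy2 : x/2 ≤ y := by
      have := abs_lt.1 (mem_ball_iff_norm.1 hy)
      linarith [this.1]
    have h1 : Real.exp (-y * Real.cosh u) ≤ Real.exp (-(x/2) * Real.cosh u) := by
      apply Real.exp_le_exp.2
      have := (Real.cosh_pos u).le
      nlinarith
    rw [norm_neg, Real.norm_eq_abs, abs_of_nonneg (by positivity)]
    gcongr
  · exact int_1 ht (by positivity)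
  · filter_upwards with u
    intro y hy
    have : HasDerivAt (fun y : ℝ => -y * Real.cosh u) (-Real.cosh u) y := by
      simpa [mul_comm] using ((hasDerivAt_id y).neg.const_mul (Real.cosh u))
    have := (this.exp).mul_const (Real.cosh (t*u))
    refine this.congr_deriv (Eq.symm ?_)
    ring

lemma Kder_zero {x : ℝ} (hx : 0 < x) : Kder 0 x = besselK 1 x := by
  unfold Kder besselK
  congr 1
  funext u
  simp only [Real.cosh_zero, zero_mul, one_mul, mul_one]
  ring

lemma besselK_two {x : ℝ} (hx : 0 < x) :
    besselK 2 x = besselK 0 x + 2 * besselK 1 x / x := by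
  set f : ℝ → ℝ := fun u => -(2/x) * (Real.sinh u * Real.exp (-x * Real.cosh u)) with hf
  set f' : ℝ → ℝ := fun u => 2 * Real.sinh u ^ 2 * Real.exp (-x * Real.cosh u)
      - (2/x) * (Real.cosh u * Real.exp (-x * Real.cosh u)) with hf'
  have hderiv : ∀ u ∈ Set.Ici (0:ℝ), HasDerivAt f (f' u) u := by
    intro u _
    have h1 : HasDerivAt (fun u : ℝ => -x * Real.cosh u) (-x * Real.sinh u) u :=
      (Real.hasDerivAt_cosh u).const_mul (-x)
    have h2 := ((Real.hasDerivAt_sinh u).mul h1.exp).const_mul (-(2/x))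
    refine h2.congr_deriv ?_
    simp only [hf']
    field_simp
    ring
  have hint : IntegrableOn f' (Set.Ioi (0:ℝ)) := by
    have e0 := int_k 0 (le_refl 0) hx
    have e2 := int_k 2 (le_refl 0) hx
    have e1 := int_k 1 (le_refl 0) hx
    have : f' = fun u => (2 * (Real.cosh u ^ 2 * (Real.exp (-x * Real.cosh u) * Real.cosh (0 * u)))
        - 2 * (Real.cosh u ^ 0 * (Real.exp (-x * Real.cosh u) * Real.cosh (0 * u))))
        - (2/x) * (Real.cosh u ^ 1 * (Real.exp (-x * Real.cosh u) * Real.cosh (0 * u))) := by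
      funext u
      simp only [hf', Real.sinh_sq, zero_mul, Real.cosh_zero, pow_zero, pow_one]
      ring
    rw [this]
    exact ((e2.const_mul 2).sub (e0.const_mul 2)).sub (e1.const_mul (2/x))
  have hlim : Tendsto f atTop (𝓝 0) := by
    apply squeeze_zero_norm' (a := fun u => (2/x) * Real.exp (-u))
    · filter_upwards [aux_event x (by norm_num : (0:ℝ) ≤ 1) hx,
        eventually_ge_atTop (0:ℝ)] with u h1 h2
      have hs : |Real.sinh u| ≤ Real.exp u := by
        rw [Real.abs_sinh, abs_of_nonneg h2, Real.sinh_eq]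
        have := (Real.exp_pos (-u)).le
        linarith [Real.exp_pos u]
      have : |f u| = (2/x) * (|Real.sinh u| * Real.exp (-x * Real.cosh u)) := by
        rw [hf]
        rw [abs_mul, abs_mul, abs_of_nonneg (Real.exp_pos _).le]
        congr 1
        rw [abs_neg, abs_of_nonneg (by positivity)]
      rw [Real.norm_eq_abs, this]
      have hb : |Real.sinh u| * Real.exp (-x * Real.cosh u) ≤ Real.exp (-u) := by
        calc |Real.sinh u| * Real.exp (-x * Real.cosh u)
            ≤ Real.exp u * Real.exp (-x * Real.cosh u) :=
              mul_le_mul_of_nonneg_right hs (Real.exp_pos _).le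
          _ = Real.exp (1 * u - x * Real.cosh u) := by rw [← Real.exp_add]; ring_nf
          _ ≤ Real.exp (-u) := h1
      have : (0:ℝ) ≤ 2/x := by positivity
      exact mul_le_mul_of_nonneg_left hb this
    · have : Tendsto (fun u : ℝ => Real.exp (-u)) atTop (nhds 0) :=
        Real.tendsto_exp_atBot.comp tendsto_neg_atTop_atBot
      simpa using this.const_mul (2/x)
  have key := integral_Ioi_of_hasDerivAt_of_tendsto' hderiv hint hlim
  have hf0 : f 0 = 0 := by simp [hf]
  rw [hf0, sub_zero] at key
  -- key : ∫ u in Ioi 0, f' u = 0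
  have split : ∫ u in Set.Ioi (0:ℝ), f' u
      = (∫ u in Set.Ioi (0:ℝ), 2 * Real.sinh u ^ 2 * Real.exp (-x * Real.cosh u))
        - (2/x) * besselK 1 x := by
    unfold besselK
    rw [← MeasureTheory.integral_const_mul]
    rw [← MeasureTheory.integral_sub]
    · congr 1
      funext u
      simp only [hf']
      rw [show (1:ℝ) * u = u by ring]
      ring
    · have := int_k 0 (le_refl 0) hx
      have e2 := int_k 2 (le_refl 0) hx
      have : (fun u => 2 * Real.sinh u ^ 2 * Real.exp (-x * Real.cosh u))
          = fun u => 2 * (Real.cosh u ^ 2 * (Real.exp (-x * Real.cosh u) * Real.cosh (0*u)))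
            - 2 * (Real.cosh u ^ 0 * (Real.exp (-x * Real.cosh u) * Real.cosh (0*u))) := by
        funext u
        simp only [Real.sinh_sq, zero_mul, Real.cosh_zero, pow_zero]
        ring
      rw [this]
      exact ((e2.const_mul 2).sub ((int_k 0 (le_refl 0) hx).const_mul 2))
    · exact (int_0 (by norm_num : (0:ℝ) ≤ 1) hx).const_mul (2/x)
  rw [split] at key
  have h20 : besselK 2 x - besselK 0 x
      = ∫ u in Set.Ioi (0:ℝ), 2 * Real.sinh u ^ 2 * Real.exp (-x * Real.cosh u) := by
    unfold besselK
    rw [← MeasureTheory.integral_sub (int_0 (by norm_num : (0:ℝ) ≤ 2) hx) (int_0 (le_refl 0) hx)]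
    congr 1
    funext u
    rw [Real.cosh_two_mul]
    simp only [zero_mul, Real.cosh_zero, Real.sinh_sq]
    ring
  have hx' : x ≠ 0 := hx.ne'
  rw [← h20] at key
  field_simp at key ⊢
  linarith

/-- real cast of factorial -/
noncomputable abbrev fc (n : ℕ) : ℝ := (n ! : ℝ)

lemma fc_pos (n : ℕ) : 0 < fc n := by
  unfold fc; exact_mod_cast Nat.factorial_pos n

lemma fc_succ (n : ℕ) : fc (n+1) = ((n:ℝ)+1) * fc n := by
  unfold fc; rw [Nat.factorial_succ]; push_cast; ring

lemma fc_le {a b : ℕ} (h : a ≤ b) : fc a ≤ fc b := by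
  unfold fc; exact_mod_cast Nat.factorial_le h

lemma one_le_fc (n : ℕ) : 1 ≤ fc n := by
  unfold fc; exact_mod_cast Nat.one_le_iff_ne_zero.2 (Nat.factorial_ne_zero n)

noncomputable def c1 (m j : ℕ) : ℝ :=
  Real.Gamma m * Real.Gamma ((m:ℝ) + 1) /
    (Real.Gamma ((m:ℝ) + j) * Real.Gamma ((m:ℝ) + 1 + j)) / m

noncomputable def c2 (m j : ℕ) : ℝ :=
  Real.Gamma ((m:ℝ) + 1) * Real.Gamma ((m:ℝ) + 1) /
    (Real.Gamma ((m:ℝ) + 1 + j) * Real.Gamma ((m:ℝ) + 1 + j)) / (m:ℝ) ^ 2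

lemma Gamma_cast {n : ℕ} (hn : 1 ≤ n) : Real.Gamma (n : ℝ) = fc (n-1) := by
  obtain ⟨k, rfl⟩ : ∃ k, n = k + 1 := ⟨n-1, by omega⟩
  push_cast
  rw [Real.Gamma_nat_eq_factorial]

lemma cast1 (m j : ℕ) : (m:ℝ) + j = ((m+j : ℕ) : ℝ) := by push_cast; ring
lemma cast2 (m j : ℕ) : (m:ℝ) + 1 + j = ((m+j+1 : ℕ) : ℝ) := by push_cast; ring

lemma c1_eq {m : ℕ} (hm : 1 ≤ m) (j : ℕ) :
    c1 m j = fc (m-1) * fc m / (fc (m+j-1) * fc (m+j)) / m := by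
  unfold c1
  rw [cast1, cast2, Gamma_cast hm, Gamma_cast (by omega : 1 ≤ m + j),
    show (m:ℝ) + 1 = ((m+1:ℕ):ℝ) by push_cast; ring, Gamma_cast (by omega : 1 ≤ m + 1),
    Gamma_cast (by omega : 1 ≤ m + j + 1)]
  norm_num

lemma c2_eq {m : ℕ} (hm : 1 ≤ m) (j : ℕ) :
    c2 m j = fc m * fc m / (fc (m+j) * fc (m+j)) / (m:ℝ)^2 := by
  unfold c2
  rw [cast2, show (m:ℝ) + 1 = ((m+1:ℕ):ℝ) by push_cast; ring,
    Gamma_cast (by omega : 1 ≤ m + 1), Gamma_cast (by omega : 1 ≤ m + j + 1)]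
  norm_num

lemma c1_pos {m : ℕ} (hm : 1 ≤ m) (j : ℕ) : 0 < c1 m j := by
  rw [c1_eq hm]
  have h2 : (0:ℝ) < (m:ℝ) := by exact_mod_cast hm
  have := fc_pos (m-1); have := fc_pos m; have := fc_pos (m+j-1); have := fc_pos (m+j)
  positivity

lemma c2_pos {m : ℕ} (hm : 1 ≤ m) (j : ℕ) : 0 < c2 m j := by
  rw [c2_eq hm]
  have h2 : (0:ℝ) < (m:ℝ) := by exact_mod_cast hm
  have := fc_pos m; have := fc_pos (m+j)
  positivity

lemma fc_m_eq {m : ℕ} (hm : 1 ≤ m) : fc m = (m:ℝ) * fc (m-1) := by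
  obtain ⟨k, rfl⟩ : ∃ k, m = k + 1 := ⟨m-1, by omega⟩
  rw [fc_succ]
  push_cast
  norm_num

lemma I1 {m : ℕ} (hm : 1 ≤ m) : c1 m 0 * m = 1 := by
  rw [c1_eq hm]
  have h2 : ((m:ℝ)) ≠ 0 := by positivity
  have h3 := (fc_pos (m-1)).ne'
  have h4 := (fc_pos m).ne'
  simp only [Nat.add_zero]
  field_simp

lemma I2 {m : ℕ} (hm : 1 ≤ m) (j : ℕ) : c1 m (j+1) * ((m:ℝ) + j + 1) = c2 m j := by
  rw [c1_eq hm, c2_eq hm]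
  have e1 : m + (j+1) - 1 = m + j := by omega
  have e2 : m + (j+1) = (m+j) + 1 := by omega
  rw [e1, e2, fc_succ, fc_m_eq hm]
  have h2 : ((m:ℝ)) ≠ 0 := by positivity
  have h3 := (fc_pos (m-1)).ne'
  have h5 := (fc_pos (m+j)).ne'
  have h6 : ((m:ℝ) + j + 1) ≠ 0 := by positivity
  have h7 : ((m+j:ℕ):ℝ) + 1 = (m:ℝ) + j + 1 := by push_cast; ring
  rw [h7]
  field_simp

lemma I3 {m : ℕ} (hm : 1 ≤ m) (j : ℕ) : c2 m j * ((m:ℝ) + j) = c1 m j := by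
  rw [c1_eq hm, c2_eq hm]
  have e1 : m + j = (m+j-1) + 1 := by omega
  have h2 : ((m:ℝ)) ≠ 0 := by positivity
  have h3 := (fc_pos (m-1)).ne'
  have h4 := (fc_pos (m+j-1)).ne'
  have e4 : fc (m+j) = ((m:ℝ)+j) * fc (m+j-1) := by
    rw [e1, fc_succ]
    congr 1
    have : ((m+j-1:ℕ):ℝ) = (m:ℝ) + j - 1 := by
      rw [Nat.cast_sub (by omega : 1 ≤ m + j)]; push_cast; ring
    rw [this]; ring
  rw [e4, fc_m_eq hm]
  have h6 : ((m:ℝ) + j) ≠ 0 := by positivity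
  field_simp

lemma c1_le {m : ℕ} (hm : 1 ≤ m) (j : ℕ) :
    c1 m j ≤ (fc (m-1) * fc m / m) / fc j := by
  rw [c1_eq hm, div_div, div_div]
  have h1 : fc j ≤ fc (m+j-1) := fc_le (by omega)
  have h2 : (1:ℝ) ≤ fc (m+j) := one_le_fc _
  have hm' : (0:ℝ) < (m:ℝ) := by exact_mod_cast hm
  apply div_le_div_of_nonneg_left (by positivity) (by positivity)
  nlinarith [mul_le_mul_of_nonneg_left h1 hm'.le,
      mul_le_mul_of_nonneg_left h2 (mul_nonneg (fc_pos (m+j-1)).le hm'.le)]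

lemma e4fact {m : ℕ} (hm : 1 ≤ m) (j : ℕ) : fc (m+j) = ((m:ℝ)+j) * fc (m+j-1) := by
  rw [show m + j = (m+j-1) + 1 by omega, fc_succ]
  congr 1
  rw [Nat.cast_sub (by omega : 1 ≤ m + j)]
  push_cast
  ring

lemma mc1_le {m : ℕ} (hm : 1 ≤ m) (j : ℕ) :
    ((m:ℝ) + j) * c1 m j ≤ (fc m * fc m / (m:ℝ)^2) / fc j := by
  have hm' : (0:ℝ) < (m:ℝ) := by exact_mod_cast hm
  have hmj : (0:ℝ) < (m:ℝ) + j := by positivity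
  have h4 := fc_pos (m+j-1)
  have h5 := fc_pos (m-1)
  have hj := fc_pos j
  have lhs_eq : ((m:ℝ)+j) * c1 m j = fc (m-1)^2 / fc (m+j-1)^2 := by
    rw [c1_eq hm, e4fact hm j, fc_m_eq hm]
    field_simp
  have rhs_eq : (fc m * fc m / (m:ℝ)^2) / fc j = fc (m-1)^2 / fc j := by
    rw [fc_m_eq hm]
    field_simp
  rw [lhs_eq, rhs_eq]
  have h1 : fc j ≤ fc (m+j-1) := fc_le (by omega)
  have h2 : (1:ℝ) ≤ fc (m+j-1) := one_le_fc _
  apply div_le_div_of_nonneg_left (by positivity) (by positivity)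
  nlinarith

lemma c2_le {m : ℕ} (hm : 1 ≤ m) (j : ℕ) :
    c2 m j ≤ (fc m * fc m / (m:ℝ)^2) / fc j := by
  rw [c2_eq hm, div_div, div_div]
  have h1 : fc j ≤ fc (m+j) := fc_le (by omega)
  have h2 : (1:ℝ) ≤ fc (m+j) := one_le_fc _
  have hm' : (0:ℝ) < (m:ℝ) := by exact_mod_cast hm
  apply div_le_div_of_nonneg_left (by positivity) (by positivity)
  nlinarith [mul_le_mul_of_nonneg_left h1 (by positivity : (0:ℝ) ≤ (m:ℝ)^2),
      mul_le_mul_of_nonneg_left h2 (mul_nonneg (fc_pos (m+j)).le (by positivity : (0:ℝ) ≤ (m:ℝ)^2))]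

lemma mc2_le {m : ℕ} (hm : 1 ≤ m) (j : ℕ) :
    ((m:ℝ) + j + 1) * c2 m j
      ≤ (fc m * fc m / (m:ℝ)^2 * 2^(m+1)) * 2^j / fc j := by
  have hm' : (0:ℝ) < (m:ℝ) := by exact_mod_cast hm
  have key : ((m:ℝ) + j + 1) ≤ 2^(m+1) * 2^j := by
    have h : m+j+1 < 2^(m+j+1) := Nat.lt_two_pow_self
    have h2 : ((m+j+1 : ℕ) : ℝ) ≤ ((2^(m+j+1) : ℕ) : ℝ) := by exact_mod_cast h.le
    calc ((m:ℝ) + j + 1) = ((m+j+1 : ℕ) : ℝ) := by push_cast; ring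
      _ ≤ ((2^(m+j+1) : ℕ) : ℝ) := h2
      _ = 2^(m+1) * 2^j := by push_cast; rw [← pow_add]; ring_nf
  calc ((m:ℝ)+j+1) * c2 m j ≤ (2^(m+1) * 2^j) * c2 m j :=
        mul_le_mul_of_nonneg_right key (c2_pos hm j).le
    _ ≤ (2^(m+1) * 2^j) * ((fc m * fc m / (m:ℝ)^2) / fc j) :=
        mul_le_mul_of_nonneg_left (c2_le hm j) (by positivity)
    _ = (fc m * fc m / (m:ℝ)^2 * 2^(m+1)) * 2^j / fc j := by ring
-- K derivative corollaries
lemma K0_deriv {x : ℝ} (hx : 0 < x) : HasDerivAt (besselK 0) (-besselK 1 x) x := by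
  have h := besselK_hasDerivAt (le_refl 0) hx
  rwa [Kder_zero hx] at h

lemma Kder_one {x : ℝ} (hx : 0 < x) : Kder 1 x = besselK 0 x + besselK 1 x / x := by
  have h2 : Kder 1 x = (besselK 2 x + besselK 0 x) / 2 := by
    unfold Kder besselK
    rw [show (fun u => Real.cosh u * (Real.exp (-x * Real.cosh u) * Real.cosh (1 * u)))
        = fun u => ((Real.exp (-x * Real.cosh u) * Real.cosh (2 * u))
          + (Real.exp (-x * Real.cosh u) * Real.cosh (0 * u))) / 2 by
      funext u
      rw [Real.cosh_two_mul]
      simp only [one_mul, zero_mul, Real.cosh_zero, Real.sinh_sq]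
      ring]
    rw [MeasureTheory.integral_div, MeasureTheory.integral_add
      (int_0 (by norm_num) hx) (int_0 (le_refl 0) hx)]
  rw [h2, besselK_two hx]
  field_simp
  ring

lemma K1_deriv {x : ℝ} (hx : 0 < x) :
    HasDerivAt (besselK 1) (-(besselK 0 x + besselK 1 x / x)) x := by
  have h := besselK_hasDerivAt (by norm_num : (0:ℝ) ≤ 1) hx
  rwa [Kder_one hx] at h

-- series terms
noncomputable def g1 (m j : ℕ) (z : ℝ) : ℝ := c1 m j * z ^ (m+j)
noncomputable def g2 (m j : ℕ) (z : ℝ) : ℝ := c2 m j * z ^ (((m+j:ℕ):ℝ) + 1/2)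
noncomputable def d1 (m j : ℕ) (z : ℝ) : ℝ := c1 m j * (((m+j:ℕ):ℝ) * z ^ (m+j-1))
noncomputable def d2 (m j : ℕ) (z : ℝ) : ℝ :=
  c2 m j * ((((m+j:ℕ):ℝ) + 1/2) * z ^ ((((m+j:ℕ):ℝ) + 1/2) - 1))

lemma hasDerivAt_g1 (m j : ℕ) (z : ℝ) : HasDerivAt (g1 m j) (d1 m j z) z := by
  have := (hasDerivAt_pow (m+j) z).const_mul (c1 m j)
  unfold g1 d1
  simpa using this

lemma hasDerivAt_g2 {m : ℕ} (hm : 1 ≤ m) (j : ℕ) (z : ℝ) :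
    HasDerivAt (g2 m j) (d2 m j z) z := by
  have h1 : (1:ℝ) ≤ ((m+j:ℕ):ℝ) + 1/2 := by
    have : (1:ℝ) ≤ ((m+j:ℕ):ℝ) := by exact_mod_cast (by omega : 1 ≤ m + j)
    linarith
  have h2 := (Real.hasDerivAt_rpow_const (x := z) (p := ((m+j:ℕ):ℝ) + 1/2) (Or.inr h1)).const_mul
    (c2 m j)
  unfold g2 d2
  simpa using h2

lemma summable_of_bound {e : ℕ → ℝ} (K r : ℝ) (h : ∀ j, |e j| ≤ K * r ^ j / fc j) :
    Summable e := by
  apply Summable.of_norm_bounded ?_ h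
  have := (Real.summable_pow_div_factorial r).mul_left K
  simpa [mul_div_assoc, fc] using this

lemma g1_bound {m : ℕ} (hm : 1 ≤ m) {R z : ℝ} (hR : 1 ≤ R) (hz0 : 0 ≤ z) (hzR : z ≤ R)
    (j : ℕ) : |g1 m j z| ≤ (fc (m-1) * fc m / m * R^m) * R ^ j / fc j := by
  have hc := c1_pos hm j
  have hRpos : (0:ℝ) < R := lt_of_lt_of_le one_pos hR
  have hz : |z| ≤ R := by rw [abs_of_nonneg hz0]; exact hzR
  have hzp : |z ^ (m+j)| ≤ R ^ (m+j) := by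
    rw [abs_pow]
    exact pow_le_pow_left₀ (abs_nonneg z) hz _
  calc |g1 m j z| = c1 m j * |z ^ (m+j)| := by
        rw [g1, abs_mul, abs_of_nonneg hc.le]
    _ ≤ (fc (m-1) * fc m / m / fc j) * R ^ (m+j) := by
        apply mul_le_mul (c1_le hm j) hzp (abs_nonneg _) (by positivity)
    _ = (fc (m-1) * fc m / m * R^m) * R ^ j / fc j := by
        rw [pow_add]; ring

lemma d1_bound {m : ℕ} (hm : 1 ≤ m) {R z : ℝ} (hR : 1 ≤ R) (hz0 : 0 ≤ z) (hzR : z ≤ R)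
    (j : ℕ) : |d1 m j z| ≤ (fc m * fc m / (m:ℝ)^2 * R^m) * R ^ j / fc j := by
  have hc := c1_pos hm j
  have hRpos : (0:ℝ) < R := lt_of_lt_of_le one_pos hR
  have hz : |z| ≤ R := by rw [abs_of_nonneg hz0]; exact hzR
  have hzp : |z ^ (m+j-1)| ≤ R ^ (m+j) := by
    rw [abs_pow]
    calc |z| ^ (m+j-1) ≤ R ^ (m+j-1) := pow_le_pow_left₀ (abs_nonneg z) hz _
      _ ≤ R ^ (m+j) := pow_le_pow_right₀ hR (by omega)
  have hmj : (0:ℝ) ≤ ((m+j:ℕ):ℝ) := by positivity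
  calc |d1 m j z| = (((m+j:ℕ):ℝ) * c1 m j) * |z ^ (m+j-1)| := by
        rw [d1, abs_mul, abs_mul, abs_of_nonneg hc.le, abs_of_nonneg hmj]; ring
    _ ≤ (fc m * fc m / (m:ℝ)^2 / fc j) * R ^ (m+j) := by
        apply mul_le_mul ?_ hzp (abs_nonneg _) (by positivity)
        have := mc1_le hm j
        rwa [show ((m+j:ℕ):ℝ) = (m:ℝ) + j by push_cast; ring]
    _ = (fc m * fc m / (m:ℝ)^2 * R^m) * R ^ j / fc j := by
        rw [pow_add]; ring

lemma g2_bound {m : ℕ} (hm : 1 ≤ m) {R z : ℝ} (hR : 1 ≤ R) (hz0 : 0 ≤ z) (hzR : z ≤ R)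
    (j : ℕ) : |g2 m j z| ≤ (fc m * fc m / (m:ℝ)^2 * R^(m+1)) * R ^ j / fc j := by
  have hc := c2_pos hm j
  have hRpos : (0:ℝ) < R := lt_of_lt_of_le one_pos hR
  have hzp : |z ^ (((m+j:ℕ):ℝ) + 1/2)| ≤ R ^ (m+j+1) := by
    rw [abs_of_nonneg (Real.rpow_nonneg hz0 _)]
    calc z ^ (((m+j:ℕ):ℝ) + 1/2) ≤ R ^ (((m+j:ℕ):ℝ) + 1/2) :=
          Real.rpow_le_rpow hz0 hzR (by positivity)
      _ ≤ R ^ (((m+j+1:ℕ):ℝ)) := by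
          apply Real.rpow_le_rpow_of_exponent_le hR
          push_cast; linarith
      _ = R ^ (m+j+1) := Real.rpow_natCast R _
  calc |g2 m j z| = c2 m j * |z ^ (((m+j:ℕ):ℝ) + 1/2)| := by
        rw [g2, abs_mul, abs_of_nonneg hc.le]
    _ ≤ (fc m * fc m / (m:ℝ)^2 / fc j) * R ^ (m+j+1) := by
        apply mul_le_mul (c2_le hm j) hzp (abs_nonneg _) (by positivity)
    _ = (fc m * fc m / (m:ℝ)^2 * R^(m+1)) * R ^ j / fc j := by
        rw [show m+j+1 = (m+1)+j by omega, pow_add]; ring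

lemma d2_bound {m : ℕ} (hm : 1 ≤ m) {R z : ℝ} (hR : 1 ≤ R) (hz0 : 0 < z) (hzR : z ≤ R)
    (j : ℕ) : |d2 m j z| ≤ (fc m * fc m / (m:ℝ)^2 * 2^(m+1) * R^m) * (2*R) ^ j / fc j := by
  have hc := c2_pos hm j
  have hRpos : (0:ℝ) < R := lt_of_lt_of_le one_pos hR
  have hexp : (((m+j:ℕ):ℝ) + 1/2) - 1 = ((m+j:ℕ):ℝ) - 1/2 := by ring
  have hmj1 : (1:ℝ) ≤ ((m+j:ℕ):ℝ) := by exact_mod_cast (by omega : 1 ≤ m + j)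
  have hzp : |z ^ ((((m+j:ℕ):ℝ) + 1/2) - 1)| ≤ R ^ (m+j) := by
    rw [abs_of_nonneg (Real.rpow_nonneg hz0.le _), hexp]
    calc z ^ (((m+j:ℕ):ℝ) - 1/2) ≤ R ^ (((m+j:ℕ):ℝ) - 1/2) :=
          Real.rpow_le_rpow hz0.le hzR (by linarith)
      _ ≤ R ^ (((m+j:ℕ):ℝ)) := Real.rpow_le_rpow_of_exponent_le hR (by linarith)
      _ = R ^ (m+j) := Real.rpow_natCast R _
  have hfac : (0:ℝ) ≤ ((m+j:ℕ):ℝ) + 1/2 := by linarith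
  calc |d2 m j z| = ((((m+j:ℕ):ℝ) + 1/2) * c2 m j) * |z ^ ((((m+j:ℕ):ℝ) + 1/2) - 1)| := by
        rw [d2, abs_mul, abs_mul, abs_of_nonneg hc.le, abs_of_nonneg hfac]; ring
    _ ≤ (fc m * fc m / (m:ℝ)^2 * 2^(m+1) * 2^j / fc j) * R ^ (m+j) := by
        apply mul_le_mul ?_ hzp (abs_nonneg _) (by positivity)
        have h := mc2_le hm j
        calc (((m+j:ℕ):ℝ) + 1/2) * c2 m j ≤ ((m:ℝ) + j + 1) * c2 m j := by
              apply mul_le_mul_of_nonneg_right ?_ hc.le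
              push_cast; linarith
          _ ≤ fc m * fc m / (m:ℝ)^2 * 2^(m+1) * 2^j / fc j := h
    _ = (fc m * fc m / (m:ℝ)^2 * 2^(m+1) * R^m) * (2*R) ^ j / fc j := by
        rw [pow_add, mul_pow]; ring

lemma summable_g1 {m : ℕ} (hm : 1 ≤ m) {R z : ℝ} (hR : 1 ≤ R) (hz0 : 0 ≤ z) (hzR : z ≤ R) :
    Summable (fun j => g1 m j z) :=
  summable_of_bound _ _ (fun j => g1_bound hm hR hz0 hzR j)

lemma summable_d1 {m : ℕ} (hm : 1 ≤ m) {R z : ℝ} (hR : 1 ≤ R) (hz0 : 0 ≤ z) (hzR : z ≤ R) :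
    Summable (fun j => d1 m j z) :=
  summable_of_bound _ _ (fun j => d1_bound hm hR hz0 hzR j)

lemma summable_g2 {m : ℕ} (hm : 1 ≤ m) {R z : ℝ} (hR : 1 ≤ R) (hz0 : 0 ≤ z) (hzR : z ≤ R) :
    Summable (fun j => g2 m j z) :=
  summable_of_bound _ _ (fun j => g2_bound hm hR hz0 hzR j)

lemma summable_d2 {m : ℕ} (hm : 1 ≤ m) {R z : ℝ} (hR : 1 ≤ R) (hz0 : 0 < z) (hzR : z ≤ R) :
    Summable (fun j => d2 m j z) :=
  summable_of_bound _ _ (fun j => d2_bound hm hR hz0 hzR j)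

lemma summable_u {K r : ℝ} : Summable (fun j : ℕ => K * r ^ j / fc j) := by
  have := (Real.summable_pow_div_factorial r).mul_left K
  simpa [mul_div_assoc, fc] using this

lemma hasDerivAt_S1 {m : ℕ} (hm : 1 ≤ m) {R z : ℝ} (hR : 1 ≤ R) (hz : z ∈ Set.Ioo (0:ℝ) R) :
    HasDerivAt (fun y => ∑' j, g1 m j y) (∑' j, d1 m j z) z := by
  apply hasDerivAt_tsum_of_isPreconnected
    (u := fun j => (fc m * fc m / (m:ℝ)^2 * R^m) * R ^ j / fc j)
    summable_u isOpen_Ioo (convex_Ioo _ _).isPreconnected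
    (fun j y _ => hasDerivAt_g1 m j y)
    (fun j y hy => by
      rw [Real.norm_eq_abs]
      exact d1_bound hm hR hy.1.le hy.2.le j)
    hz (summable_g1 hm hR hz.1.le hz.2.le) hz

lemma hasDerivAt_S2 {m : ℕ} (hm : 1 ≤ m) {R z : ℝ} (hR : 1 ≤ R) (hz : z ∈ Set.Ioo (0:ℝ) R) :
    HasDerivAt (fun y => ∑' j, g2 m j y) (∑' j, d2 m j z) z := by
  apply hasDerivAt_tsum_of_isPreconnected
    (u := fun j => (fc m * fc m / (m:ℝ)^2 * 2^(m+1) * R^m) * (2*R) ^ j / fc j)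
    summable_u isOpen_Ioo (convex_Ioo _ _).isPreconnected
    (fun j y _ => hasDerivAt_g2 hm j y)
    (fun j y hy => by
      rw [Real.norm_eq_abs]
      exact d2_bound hm hR hy.1 hy.2.le j)
    hz (summable_g2 hm hR hz.1.le hz.2.le) hz

-- rpow helper identities for 0 < z
lemma rpow_helper1 {z : ℝ} (hz : 0 < z) (n : ℕ) :
    z ^ ((n:ℝ) + 1/2) = z ^ n * Real.sqrt z := by
  rw [Real.rpow_add hz, Real.rpow_natCast, ← Real.sqrt_eq_rpow]

lemma idA {m : ℕ} (hm : 1 ≤ m) {z : ℝ} (hz : 0 < z) :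
    ∑' j, d1 m j z = z ^ ((m:ℝ) - 1) + (∑' j, g2 m j z) / Real.sqrt z := by
  have hs : Summable (fun j => d1 m j z) :=
    summable_d1 hm (le_max_right z 1) hz.le (le_max_left z 1)
  rw [Summable.tsum_eq_zero_add hs]
  have hsq : Real.sqrt z ≠ 0 := (Real.sqrt_pos.2 hz).ne'
  congr 1
  · -- d1 m 0 z = z ^ ((m:ℝ)-1)
    have : d1 m 0 z = (c1 m 0 * m) * z ^ (m-1) := by
      rw [d1]; push_cast; ring_nf
    rw [this, I1 hm, one_mul, ← Real.rpow_natCast z (m-1), Nat.cast_sub hm, Nat.cast_one]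
  · -- shifted sum
    rw [← tsum_div_const]
    apply tsum_congr
    intro j
    have e1 : d1 m (j+1) z = (c1 m (j+1) * ((m:ℝ) + j + 1)) * z ^ (m+j) := by
      rw [d1, show m + (j+1) - 1 = m + j by omega]
      push_cast; ring
    rw [e1, I2 hm j, g2, rpow_helper1 hz (m+j)]
    field_simp

lemma idB {m : ℕ} (hm : 1 ≤ m) {z : ℝ} (hz : 0 < z) :
    ∑' j, d2 m j z = (∑' j, g1 m j z) / Real.sqrt z + (∑' j, g2 m j z) / (2*z) := by
  have hR : (1:ℝ) ≤ max z 1 := le_max_right z 1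
  have hzR : z ≤ max z 1 := le_max_left z 1
  have hs1 : Summable (fun j => g1 m j z / Real.sqrt z) :=
    (summable_g1 hm hR hz.le hzR).div_const _
  have hs2 : Summable (fun j => g2 m j z / (2*z)) :=
    (summable_g2 hm hR hz.le hzR).div_const _
  rw [← tsum_div_const, ← tsum_div_const, ← Summable.tsum_add hs1 hs2]
  apply tsum_congr
  intro j
  have hsq : (0:ℝ) < Real.sqrt z := Real.sqrt_pos.2 hz
  have hzsq : Real.sqrt z * Real.sqrt z = z := Real.mul_self_sqrt hz.le
  -- express everything via w := z ^ ((m+j:ℝ) - 1/2)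
  have e0 : z ^ ((((m+j:ℕ):ℝ) + 1/2) - 1) = z ^ (((m+j:ℕ):ℝ) - 1/2) := by
    congr 1
    ring
  have e1 : g1 m j z / Real.sqrt z = c1 m j * z ^ (((m+j:ℕ):ℝ) - 1/2) := by
    rw [g1, ← Real.rpow_natCast z (m+j), Real.rpow_sub hz, ← Real.sqrt_eq_rpow]
    ring
  have e2 : g2 m j z / (2*z) = (c2 m j / 2) * z ^ (((m+j:ℕ):ℝ) - 1/2) := by
    rw [g2, show (((m+j:ℕ):ℝ) - 1/2) = (((m+j:ℕ):ℝ) + 1/2) - 1 by ring, Real.rpow_sub hz,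
      Real.rpow_one]
    field_simp
  rw [e1, e2, d2, e0]
  have h3 := I3 hm j
  have : c2 m j * (((m+j:ℕ):ℝ) + 1/2) = c1 m j + c2 m j / 2 := by
    have : ((m+j:ℕ):ℝ) = (m:ℝ) + j := by push_cast; ring
    rw [this]
    linear_combination h3
  linear_combination (z ^ (((m+j:ℕ):ℝ) - 1/2)) * this

/-- Generalized hypergeometric function `₁F₂(1; a, b; z)`. -/
noncomputable def oneF2 (a b z : ℝ) : ℝ :=
  ∑' j : ℕ, z ^ j * (Real.Gamma a * Real.Gamma b) /
    (Real.Gamma (a + j) * Real.Gamma (b + j))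

lemma br1 {m : ℕ} (hm : 1 ≤ m) {z : ℝ} (hz : 0 < z) :
    z ^ ((m:ℝ)) * oneF2 m (m + 1) z / m = ∑' j, g1 m j z := by
  unfold oneF2
  rw [← tsum_mul_left, ← tsum_div_const]
  apply tsum_congr
  intro j
  rw [g1, c1, Real.rpow_natCast]
  rw [pow_add]
  ring

lemma br2 {m : ℕ} (hm : 1 ≤ m) {z : ℝ} (hz : 0 < z) :
    z ^ ((m:ℝ) + 1/2) * oneF2 (m + 1) (m + 1) z / (m:ℝ)^2 = ∑' j, g2 m j z := by
  unfold oneF2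
  rw [← tsum_mul_left, ← tsum_div_const]
  apply tsum_congr
  intro j
  rw [g2, c2]
  have e : z ^ ((m:ℝ) + 1/2) * z ^ j = z ^ (((m+j:ℕ):ℝ) + 1/2) := by
    rw [← Real.rpow_natCast z j, ← Real.rpow_add hz]
    congr 1
    push_cast
    ring
  rw [← e]
  ring

lemma keyDeriv {m : ℕ} (hm : 1 ≤ m) {R z : ℝ} (hR : 1 ≤ R) (hz : z ∈ Set.Ioo (0:ℝ) R) :
    HasDerivAt (fun y => besselK 0 (2 * Real.sqrt y) * (∑' j, g1 m j y)
        + besselK 1 (2 * Real.sqrt y) * (∑' j, g2 m j y))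
      (z ^ ((m:ℝ) - 1) * besselK 0 (2 * Real.sqrt z)) z := by
  obtain ⟨hz0, hzR⟩ := hz
  have hs : 0 < Real.sqrt z := Real.sqrt_pos.2 hz0
  have hs2 : Real.sqrt z * Real.sqrt z = z := Real.mul_self_sqrt hz0.le
  have h2s : 0 < 2 * Real.sqrt z := by positivity
  have hΦ : HasDerivAt (fun y => 2 * Real.sqrt y) (1 / Real.sqrt z) z := by
    have := (Real.hasDerivAt_sqrt hz0.ne').const_mul 2
    refine this.congr_deriv (Eq.symm ?_)
    rw [mul_one_div]
    rw [div_eq_div_iff hs.ne' (by positivity : (2:ℝ) * Real.sqrt z ≠ 0)]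
    ring
  have hK0c : HasDerivAt (fun y => besselK 0 (2 * Real.sqrt y))
      (-besselK 1 (2 * Real.sqrt z) * (1 / Real.sqrt z)) z := by
    have := (K0_deriv h2s).comp z hΦ; exact this
  have hK1c : HasDerivAt (fun y => besselK 1 (2 * Real.sqrt y))
      (-(besselK 0 (2 * Real.sqrt z) + besselK 1 (2 * Real.sqrt z) / (2 * Real.sqrt z))
        * (1 / Real.sqrt z)) z := by
    have := (K1_deriv h2s).comp z hΦ; exact this
  have hS1 := hasDerivAt_S1 hm hR ⟨hz0, hzR⟩
  have hS2 := hasDerivAt_S2 hm hR ⟨hz0, hzR⟩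
  have total := (hK0c.mul hS1).add (hK1c.mul hS2)
  rw [idA hm hz0, idB hm hz0] at total
  refine total.congr_deriv (Eq.symm ?_)
  set K0 := besselK 0 (2 * Real.sqrt z)
  set K1 := besselK 1 (2 * Real.sqrt z)
  set A := ∑' j, g1 m j z
  set B := ∑' j, g2 m j z
  set P := z ^ ((m:ℝ) - 1)
  rw [show (2:ℝ) * z = 2 * (Real.sqrt z * Real.sqrt z) by rw [hs2]]
  field_simp
  ring

theorem stmt_9 (m : ℕ) (hm : 1 ≤ m) (ζ ξ : ℝ) (hζ : 0 < ζ) (hζξ : ζ < ξ)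
    (G : ℝ → ℝ)
    (hG : G = fun z => z ^ (m : ℝ) * besselK 0 (2 * Real.sqrt z) * oneF2 m (m + 1) z / m
        + z ^ ((m : ℝ) + 1 / 2) * besselK 1 (2 * Real.sqrt z) * oneF2 (m + 1) (m + 1) z
            / (m : ℝ) ^ 2) :
    ∫ z in (ζ ^ 2)..(ξ ^ 2), z ^ ((m : ℝ) - 1) * besselK 0 (2 * Real.sqrt z)
      = G (ξ ^ 2) - G (ζ ^ 2) := by
  set R : ℝ := ξ^2 + 1 with hRdef
  have hξ : 0 < ξ := lt_trans hζ hζξ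
  have hζ2 : 0 < ζ^2 := by positivity
  have hζξ2 : ζ^2 < ξ^2 := by nlinarith
  have hR1 : (1:ℝ) ≤ R := by nlinarith [sq_nonneg ξ]
  have hmem : ∀ x ∈ Set.uIcc (ζ^2) (ξ^2), x ∈ Set.Ioo (0:ℝ) R := by
    intro x hx
    rw [Set.uIcc_of_le hζξ2.le] at hx
    constructor
    · linarith [hx.1]
    · have := hx.2
      rw [hRdef]
      linarith
  set H : ℝ → ℝ := fun y => besselK 0 (2 * Real.sqrt y) * (∑' j, g1 m j y)
      + besselK 1 (2 * Real.sqrt y) * (∑' j, g2 m j y) with hHdef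
  have hGH : ∀ y, 0 < y → G y = H y := by
    intro y hy
    rw [hG, hHdef]
    simp only
    rw [← br1 hm hy, ← br2 hm hy]
    ring
  have hder : ∀ x ∈ Set.uIcc (ζ^2) (ξ^2),
      HasDerivAt H (x ^ ((m:ℝ) - 1) * besselK 0 (2 * Real.sqrt x)) x :=
    fun x hx => keyDeriv hm hR1 (hmem x hx)
  have hcont : ContinuousOn (fun x => x ^ ((m:ℝ) - 1) * besselK 0 (2 * Real.sqrt x))
      (Set.uIcc (ζ^2) (ξ^2)) := by
    intro x hx
    have hx0 : 0 < x := (hmem x hx).1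
    apply ContinuousAt.continuousWithinAt
    apply ContinuousAt.mul
    · exact Real.continuousAt_rpow_const x _ (Or.inl hx0.ne')
    · have hΦ := (Real.hasDerivAt_sqrt hx0.ne').const_mul 2
      exact ((K0_deriv (by positivity : (0:ℝ) < 2 * Real.sqrt x)).comp x hΦ).continuousAt
  have hint : IntervalIntegrable (fun x => x ^ ((m:ℝ) - 1) * besselK 0 (2 * Real.sqrt x))
      volume (ζ^2) (ξ^2) := hcont.intervalIntegrable
  rw [intervalIntegral.integral_eq_sub_of_hasDerivAt hder hint,
    hGH _ (by positivity), hGH _ hζ2]
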